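/- Let k be a field, n ≥ 1 an integer, and R = k[X]/(X^n). Let V and V' be finite free R-modules of ranks v and v' respectively, let W ⊆ V be a free R-submodule of rank w such that V/W is a free R-module, and let W' ⊆ V' be a free R-submodule of rank w' such that V'/W' is a free R-module. Then the k-vector space { f : V → V' R-linear | f(W) ⊆ W' } has k-dimension n·(w·w' + (v − w)·v'). -/

import Mathlib

set_option synthInstance.maxHeartbeats 1000000
set_option maxHeartbeats 2000000

open Polynomial

/-- The ring of truncated polynomials `R = k[X]/(X^n)`. -/
abbrev TruncPoly (k : Type*) [Field k] (n : ℕ) : Type _ :=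
  k[X] ⧸ Ideal.span {(X : k[X]) ^ n}

section Aux

variable {R V V' : Type*} [CommRing R] [AddCommGroup V] [Module R V]
  [AddCommGroup V'] [Module R V']
  (W : Submodule R V) (W' : Submodule R V')
  (s : (V ⧸ W) →ₗ[R] V) (hs : W.mkQ ∘ₗ s = LinearMap.id)

/-- The projection `V → W` coming from a section of the quotient map. -/
noncomputable def auxProj : V →ₗ[R] W :=
  LinearMap.codRestrict W (LinearMap.id - s ∘ₗ W.mkQ) (fun x => by
    have h : W.mkQ (s (W.mkQ x)) = W.mkQ x := by
      have h := congrFun (congrArg DFunLike.coe hs) (W.mkQ x)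
      simpa using h
    simp only [LinearMap.sub_apply, LinearMap.id_apply, LinearMap.comp_apply]
    rw [← Submodule.Quotient.mk_eq_zero W, ← Submodule.mkQ_apply, map_sub, h, sub_self])

theorem auxProj_apply (x : V) : (auxProj W s hs x : V) = x - s (W.mkQ x) := rfl

/-- The decomposition of the space of compatible maps given a splitting of `V → V/W`. -/
noncomputable def compatEquiv :
    (Submodule.compatibleMaps W W') ≃ₗ[R] ((W →ₗ[R] W') × ((V ⧸ W) →ₗ[R] V')) where
  toFun f := (LinearMap.restrict f.1 (fun x hx => f.2 hx), f.1 ∘ₗ s)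
  map_add' f g := by
    refine Prod.ext ?_ ?_ <;> ext x <;>
      simp [LinearMap.restrict_apply]
  map_smul' c f := by
    refine Prod.ext ?_ ?_ <;> ext x <;>
      simp [LinearMap.restrict_apply]
  invFun p := ⟨W'.subtype ∘ₗ p.1 ∘ₗ auxProj W s hs + p.2 ∘ₗ W.mkQ, by
    intro x hx
    have hq : W.mkQ x = 0 := by simpa [Submodule.Quotient.mk_eq_zero] using hx
    simp only [Submodule.mem_comap, LinearMap.add_apply, LinearMap.comp_apply, hq, map_zero,
      add_zero]
    exact (p.1 (auxProj W s hs x)).2⟩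
  left_inv f := by
    apply Subtype.ext
    ext x
    simp only [LinearMap.add_apply, LinearMap.comp_apply, Submodule.subtype_apply,
      LinearMap.restrict_coe_apply, auxProj_apply, map_sub]
    abel
  right_inv p := by
    have hsec : ∀ y : V ⧸ W, (Submodule.Quotient.mk (s y) : V ⧸ W) = y := fun y => by
      have h := congrFun (congrArg DFunLike.coe hs) y
      simpa using h
    refine Prod.ext ?_ ?_
    · ext x
      dsimp only
      have hq : W.mkQ (x : V) = 0 := by
        simpa [Submodule.Quotient.mk_eq_zero] using x.2
      have hproj : auxProj W s hs (x : V) = x := by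
        apply Subtype.ext
        rw [auxProj_apply, hq, map_zero, sub_zero]
      simp [LinearMap.restrict_apply, hq, hproj]
    · ext y
      have hproj : (auxProj W s hs (s (Submodule.Quotient.mk y)) : V) = 0 := by
        rw [auxProj_apply, Submodule.mkQ_apply, hsec, sub_self]
      have hproj' : auxProj W s hs (s (Submodule.Quotient.mk y)) = 0 :=
        Subtype.ext (by simpa using hproj)
      simp only [LinearMap.coe_comp, Function.comp_apply, Submodule.mkQ_apply,
        LinearMap.add_apply, Submodule.subtype_apply, hproj', map_zero,
        ZeroMemClass.coe_zero, zero_add, hsec]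

end Aux

theorem finrank_truncPoly (k : Type*) [Field k] (n : ℕ) :
    Module.finrank k (TruncPoly k n) = n := by
  have h : (X : k[X]) ^ n ≠ 0 := pow_ne_zero _ X_ne_zero
  have := (AdjoinRoot.powerBasis h).finrank
  simp [AdjoinRoot.powerBasis, natDegree_pow] at this
  exact this

/-- Over `R = k[X]/(X^n)` (`n ≥ 1`), let `V, V'` be finite free `R`-modules of
ranks `v, v'`, let `W ⊆ V` be a free `R`-submodule of rank `w` with `V/W` free, and `W' ⊆ V'`
a free `R`-submodule of rank `w'` with `V'/W'` free.  Then the `k`-vector space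
`{f : V →ₗ[R] V' | f(W) ⊆ W'}` has `k`-dimension `n·(w·w' + (v − w)·v')`. -/
theorem finrank_compatibleMaps (k : Type*) [Field k] (n : ℕ) (hn : 1 ≤ n)
    (V V' : Type*) [AddCommGroup V] [Module (TruncPoly k n) V]
    [Module k V] [IsScalarTower k (TruncPoly k n) V]
    [AddCommGroup V'] [Module (TruncPoly k n) V']
    [Module k V'] [IsScalarTower k (TruncPoly k n) V']
    [Module.Free (TruncPoly k n) V] [Module.Finite (TruncPoly k n) V]
    [Module.Free (TruncPoly k n) V'] [Module.Finite (TruncPoly k n) V']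
    (v v' w w' : ℕ)
    (hv : Module.finrank (TruncPoly k n) V = v)
    (hv' : Module.finrank (TruncPoly k n) V' = v')
    (W : Submodule (TruncPoly k n) V) (W' : Submodule (TruncPoly k n) V')
    [Module.Free (TruncPoly k n) W] [Module.Free (TruncPoly k n) W']
    (hw : Module.finrank (TruncPoly k n) W = w)
    (hw' : Module.finrank (TruncPoly k n) W' = w')
    [Module.Free (TruncPoly k n) (V ⧸ W)] [Module.Free (TruncPoly k n) (V' ⧸ W')] :
    Module.finrank k (Submodule.compatibleMaps W W') = n * (w * w' + (v - w) * v') := by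
  set R := TruncPoly k n with hR
  -- R is nontrivial
  haveI : Nontrivial R := Ideal.Quotient.nontrivial_iff.mpr (by
    refine Ideal.span_singleton_ne_top ?_
    exact Polynomial.not_isUnit_of_natDegree_pos _ (by simpa [natDegree_pow] using Nat.lt_of_lt_of_le Nat.zero_lt_one hn))
  -- obtain a splitting of the quotient map
  obtain ⟨s, hs⟩ := Module.projective_lifting_property W.mkQ (LinearMap.id (M := V ⧸ W))
    (Submodule.mkQ_surjective W)
  -- the product decomposition of V
  have e2 : ((W × (V ⧸ W)) ≃ₗ[R] V) :=
    lequivProdOfRightSplitExact (j := W.subtype) (g := W.mkQ)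
      (Submodule.injective_subtype W)
      (by rw [Submodule.range_subtype, Submodule.ker_mkQ]) hs
  haveI : Module.Finite R (W × (V ⧸ W)) := Module.Finite.equiv e2.symm
  haveI : Module.Finite R W :=
    Module.Finite.of_surjective ((LinearMap.fst R W (V ⧸ W)).comp e2.symm.toLinearMap)
      ((Prod.fst_surjective).comp e2.symm.surjective)
  haveI : Module.Finite R (V ⧸ W) := Module.Finite.quotient R W
  haveI : Module.Finite R W' := by
    haveI : IsNoetherian R V' := isNoetherian_of_isNoetherianRing_of_finite R V'
    exact Module.Finite.iff_fg.mpr (IsNoetherian.noetherian W')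
  -- rank bookkeeping over R
  have hsum : w + Module.finrank R (V ⧸ W) = v := by
    have := e2.finrank_eq
    rw [Module.finrank_prod, hw, hv] at this
    exact this
  have hQ : Module.finrank R (V ⧸ W) = v - w := by omega
  -- pass to the product of Hom spaces
  have e : (Submodule.compatibleMaps W W') ≃ₗ[R]
      ((W →ₗ[R] W') × ((V ⧸ W) →ₗ[R] V')) := compatEquiv W W' s hs
  have ek := e.restrictScalars k
  rw [ek.finrank_eq]
  -- k-structure on R
  haveI : Module.Finite k R := Module.Finite.of_basis (AdjoinRoot.powerBasis
    (pow_ne_zero n (X_ne_zero (R := k)))).basis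
  haveI : Module.Free k R := Module.Free.of_basis (AdjoinRoot.powerBasis
    (pow_ne_zero n (X_ne_zero (R := k)))).basis
  haveI : Module.Finite k (W →ₗ[R] W') := Module.Finite.trans R _
  haveI : Module.Finite k ((V ⧸ W) →ₗ[R] V') := Module.Finite.trans R _
  rw [Module.finrank_prod]
  have h1 : Module.finrank k (W →ₗ[R] W') = n * (w * w') := by
    rw [← Module.finrank_mul_finrank k R (W →ₗ[R] W'), finrank_truncPoly,
      Module.finrank_linearMap, hw, hw']
  have h2 : Module.finrank k ((V ⧸ W) →ₗ[R] V') = n * ((v - w) * v') := by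
    rw [← Module.finrank_mul_finrank k R ((V ⧸ W) →ₗ[R] V'), finrank_truncPoly,
      Module.finrank_linearMap, hQ, hv']
  rw [h1, h2, Nat.mul_add]
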